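/- Let k > 0 and β ∈ (0, π/2). Define φ(z) = z cos β + i · sqrtP(z² − k²) · sin β, γ⁺ = { w cos β + i√(w² − k²) sin β : w ∈ (k, ∞) }, γ⁻ = { w cos β − i√(w² − k²) sin β : w ∈ (k, ∞) }, D⁺ = { z + t : z ∈ γ⁺, t ∈ (0, ∞) }, and D⁻ = { z + t : z ∈ γ⁻, t ∈ (0, ∞) }. Then the restriction of φ to D⁻ is a bijection from D⁻ onto D⁺, and its inverse is the map w ↦ w cos β − i · sqrtP(w² − k²) · sin β. -/

import Mathlib

open MeasureTheory

/-- The branch of the complex square root with `θ ∈ [−π, π)`. -/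
noncomputable def sqrtP (z : ℂ) : ℂ :=
  if z.im = 0 ∧ z.re < 0 then -(z ^ (1/2 : ℂ)) else z ^ (1/2 : ℂ)

/-- The Cagniard–de Hoop mapping `φ(z) = z cos β + i sqrtP(z² − k²) sin β`. -/
noncomputable def phiCdH (k β : ℝ) (z : ℂ) : ℂ :=
  z * (Real.cos β : ℂ) + Complex.I * sqrtP (z ^ 2 - (k : ℂ) ^ 2) * (Real.sin β : ℂ)

/-- `γ⁺ = { w cos β + i√(w²−k²) sin β : w ∈ (k, ∞) }`. -/
def gammaPlus (k β : ℝ) : Set ℂ :=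
  {z | ∃ w : ℝ, k < w ∧
    z = (w * Real.cos β : ℝ) + Complex.I * (Real.sqrt (w ^ 2 - k ^ 2) * Real.sin β : ℝ)}

/-- `γ⁻ = { w cos β − i√(w²−k²) sin β : w ∈ (k, ∞) }`. -/
def gammaMinus (k β : ℝ) : Set ℂ :=
  {z | ∃ w : ℝ, k < w ∧
    z = (w * Real.cos β : ℝ) - Complex.I * (Real.sqrt (w ^ 2 - k ^ 2) * Real.sin β : ℝ)}

/-- `D⁻ = { z + t : z ∈ γ⁻, t ∈ (0, ∞) }`. -/
def DMinus (k β : ℝ) : Set ℂ :=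
  {ζ | ∃ z ∈ gammaMinus k β, ∃ t : ℝ, 0 < t ∧ ζ = z + (t : ℂ)}


/-- `D⁺ = { z + t : z ∈ γ⁺, t ∈ (0, ∞) }`. -/
def DPlus (k β : ℝ) : Set ℂ :=
  {ζ | ∃ z ∈ gammaPlus k β, ∃ t : ℝ, 0 < t ∧ ζ = z + (t : ℂ)}

lemma sqrtP_sq (z : ℂ) : sqrtP z ^ 2 = z := by
  have key : (z ^ (1/2 : ℂ)) ^ 2 = z := by
    rcases eq_or_ne z 0 with rfl | hz
    · rw [Complex.zero_cpow (by norm_num)]; ring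
    · rw [sq, ← Complex.cpow_add _ _ hz]; norm_num
  unfold sqrtP; split <;> simp [key]

lemma re_cpow_half_nonneg (z : ℂ) : 0 ≤ (z ^ (1/2 : ℂ)).re := by
  rcases eq_or_ne z 0 with rfl | hz
  · rw [Complex.zero_cpow (by norm_num)]; simp
  · rw [Complex.cpow_def_of_ne_zero hz, Complex.exp_re]
    apply mul_nonneg (Real.exp_nonneg _)
    have him : (Complex.log z * (1/2 : ℂ)).im = z.arg / 2 := by
      simp [Complex.mul_im, Complex.log_im]; ring
    rw [him]
    apply Real.cos_nonneg_of_mem_Icc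
    constructor
    · linarith [Complex.neg_pi_lt_arg z]
    · linarith [Complex.arg_le_pi z]

lemma re_sqrtP_nonneg (z : ℂ) : 0 ≤ (sqrtP z).re := by
  unfold sqrtP; split
  · rename_i h
    have hz : z ≠ 0 := by
      intro h0; rw [h0] at h; simp at h
    have harg : z.arg = Real.pi := Complex.arg_eq_pi_iff.2 ⟨h.2, h.1⟩
    rw [Complex.cpow_def_of_ne_zero hz]
    have him : (Complex.log z * (1/2 : ℂ)).im = Real.pi / 2 := by
      simp only [Complex.mul_im, Complex.log_im, harg]
      simp; ring
    rw [Complex.neg_re, Complex.exp_re, him, Real.cos_pi_div_two, mul_zero, neg_zero]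
  · exact re_cpow_half_nonneg z

lemma sqrtP_sq_of_pos_re (v : ℂ) (h : 0 < v.re) : sqrtP (v ^ 2) = v := by
  have h2 := sqrtP_sq (v ^ 2)
  have hfac : (sqrtP (v ^ 2) - v) * (sqrtP (v ^ 2) + v) = 0 := by linear_combination h2
  rcases mul_eq_zero.1 hfac with h3 | h3
  · exact sub_eq_zero.1 h3
  · exfalso
    have hneg : sqrtP (v ^ 2) = -v := by linear_combination h3
    have hre := re_sqrtP_nonneg (v ^ 2)
    rw [hneg, Complex.neg_re] at hre
    linarith

lemma key_real (a b x y c s k : ℝ) (ha : 0 < a) (hb : 0 < b) (hx : 0 < x) (hy : 0 < y)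
    (hc : 0 < c) (hs : 0 < s) (hk : 0 < k) (hcs : c^2 + s^2 = 1)
    (h1 : x^2 - y^2 = a^2 - b^2 - k^2) (h2 : x*y = a*b)
    (hH : k^2*c^2*s^2 < a^2*s^2 - b^2*c^2) :
    b*c < x*s ∧ k^2*c^2*s^2 < (a*c+y*s)^2*s^2 - (x*s-b*c)^2*c^2 := by
  have key : (x^2*s^2 - b^2*c^2)*(y^2*s^2 + b^2*c^2)
      = b^2*(a^2*s^2 - b^2*c^2 - k^2*c^2*s^2) := by
    linear_combination (b^2*c^2*s^2) * h1 + (s^4*(x*y + a*b)) * h2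
      + (a^2*b^2*s^2 - b^4*c^2) * hcs
  have hfac : 0 < y^2*s^2 + b^2*c^2 := by positivity
  have hpos : 0 < b^2*(a^2*s^2 - b^2*c^2 - k^2*c^2*s^2) := by exact mul_pos (pow_pos hb 2) (by linarith)
  have hx2 : b^2*c^2 < x^2*s^2 := by nlinarith [key, hpos, hfac]
  have hbc : b*c < x*s := by nlinarith [mul_pos hb hc, mul_pos hx hs]
  refine ⟨hbc, ?_⟩
  have hid : (a*c+y*s)^2*s^2 - (x*s-b*c)^2*c^2 - k^2*c^2*s^2
      = 2*a*c*y*s^3 + 2*x*b*c^3*s + (y^2*s^2 + b^2*c^2)*(s^2 - c^2) := by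
    linear_combination (-(s^2*c^2)) * h1
  have hb1 : 2*b^2*c^4 < 2*x*b*c^3*s := by
    nlinarith [mul_pos hb (mul_pos hc (mul_pos hc hc))]
  have hpos2 : (0:ℝ) < 2*c*s^2*y^2 := by positivity
  have hmul := mul_pos hpos2 (sub_pos.2 hbc)
  have heq : 2*a*c*y*s^3*b = 2*c*s^2*y^2*(x*s) := by linear_combination (-(2*c*y*s^3))*h2
  have hb2' : 2*c^2*s^2*y^2*b < 2*a*c*y*s^3*b := by rw [heq]; nlinarith [hmul]
  have hb2 : 2*c^2*s^2*y^2 < 2*a*c*y*s^3 := (mul_lt_mul_iff_left₀ hb).1 hb2'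
  have hfin : (y^2*s^2+b^2*c^2)*(s^2-c^2) + 2*c^2*s^2*y^2 + 2*b^2*c^4
      = y^2*s^2 + b^2*c^2 := by linear_combination (y^2*s^2+b^2*c^2)*hcs
  linarith [hid, hb1, hb2, hfin, hfac]

lemma mem_DMinus_iff (k β : ℝ) (hk : 0 < k) (hβ : β ∈ Set.Ioo 0 (Real.pi / 2)) (z : ℂ) :
    z ∈ DMinus k β ↔ z.im < 0 ∧ 0 < z.re ∧
      k^2*(Real.cos β)^2*(Real.sin β)^2 < z.re^2*(Real.sin β)^2 - z.im^2*(Real.cos β)^2 := by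
  have hc : 0 < Real.cos β := Real.cos_pos_of_mem_Ioo ⟨by linarith [hβ.1, Real.pi_pos], hβ.2⟩
  have hs : 0 < Real.sin β := Real.sin_pos_of_pos_of_lt_pi hβ.1 (by linarith [hβ.2, Real.pi_pos])
  set c := Real.cos β
  set s := Real.sin β
  constructor
  · rintro ⟨zz, ⟨w, hw, rfl⟩, t, ht, rfl⟩
    have hw0 : 0 < w := lt_trans hk hw
    have hq2 : Real.sqrt (w^2 - k^2) ^ 2 = w^2 - k^2 := Real.sq_sqrt (by nlinarith)
    have hq : 0 < Real.sqrt (w^2 - k^2) := Real.sqrt_pos.2 (by nlinarith)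
    set q := Real.sqrt (w^2 - k^2)
    have hre : ((w * c : ℝ) - Complex.I * ((q * s : ℝ)) + (t:ℂ)).re = w*c + t := by simp
    have him : ((w * c : ℝ) - Complex.I * ((q * s : ℝ)) + (t:ℂ)).im = -(q*s) := by simp
    rw [hre, him]
    refine ⟨by nlinarith, by positivity, ?_⟩
    have hq2' : q^2*s^2*c^2 = (w^2-k^2)*s^2*c^2 := by rw [hq2]
    nlinarith [hq2', mul_pos (mul_pos (mul_pos hw0 hc) ht) (mul_pos hs hs),
      mul_pos (mul_pos ht ht) (mul_pos hs hs)]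
  · rintro ⟨him, hre, hineq⟩
    set a := z.re; set b := z.im
    have hs2 : (0:ℝ) < s^2 := by positivity
    have hb2 : (0:ℝ) < b^2 := by nlinarith
    have hden : (0:ℝ) < b^2/s^2 + k^2 := by nlinarith [div_pos hb2 hs2, sq_nonneg k]
    set w := Real.sqrt (b^2/s^2 + k^2) with hw_def
    have hw2 : w^2 = b^2/s^2 + k^2 := Real.sq_sqrt hden.le
    have hw0 : 0 < w := Real.sqrt_pos.2 hden
    have hwk : k < w := by nlinarith [div_pos hb2 hs2]
    have hw2' : w^2*s^2 = b^2 + k^2*s^2 := by rw [hw2]; field_simp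
    have hq : Real.sqrt (w^2 - k^2) = -b/s := by
      rw [hw2, show b^2/s^2 + k^2 - k^2 = (-b/s)^2 from by ring]
      exact Real.sqrt_sq (div_nonneg (by linarith) hs.le)
    have h2 : (w*c)^2*s^2 < a^2*s^2 := by nlinarith [hw2', hineq, mul_pos hc hc]
    have h3 : (w*c)^2 < a^2 := by nlinarith [hs2]
    have haw : w*c < a := by nlinarith [mul_pos hw0 hc]
    refine ⟨_, ⟨w, hwk, rfl⟩, a - w*c, by linarith, ?_⟩
    rw [hq, show -b/s*s = -b from by field_simp]
    apply Complex.ext <;>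
      simp only [Complex.add_re, Complex.sub_re, Complex.ofReal_re, Complex.mul_re,
        Complex.I_re, Complex.I_im, Complex.ofReal_im, Complex.add_im, Complex.sub_im,
        Complex.mul_im] <;> ring
lemma mem_DPlus_iff (k β : ℝ) (hk : 0 < k) (hβ : β ∈ Set.Ioo 0 (Real.pi / 2)) (z : ℂ) :
    z ∈ DPlus k β ↔ 0 < z.im ∧ 0 < z.re ∧
      k^2*(Real.cos β)^2*(Real.sin β)^2 < z.re^2*(Real.sin β)^2 - z.im^2*(Real.cos β)^2 := by
  have hc : 0 < Real.cos β := Real.cos_pos_of_mem_Ioo ⟨by linarith [hβ.1, Real.pi_pos], hβ.2⟩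
  have hs : 0 < Real.sin β := Real.sin_pos_of_pos_of_lt_pi hβ.1 (by linarith [hβ.2, Real.pi_pos])
  set c := Real.cos β
  set s := Real.sin β
  constructor
  · rintro ⟨zz, ⟨w, hw, rfl⟩, t, ht, rfl⟩
    have hw0 : 0 < w := lt_trans hk hw
    have hq2 : Real.sqrt (w^2 - k^2) ^ 2 = w^2 - k^2 := Real.sq_sqrt (by nlinarith)
    have hq : 0 < Real.sqrt (w^2 - k^2) := Real.sqrt_pos.2 (by nlinarith)
    set q := Real.sqrt (w^2 - k^2)
    have hre : ((w * c : ℝ) + Complex.I * ((q * s : ℝ)) + (t:ℂ)).re = w*c + t := by simp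
    have him : ((w * c : ℝ) + Complex.I * ((q * s : ℝ)) + (t:ℂ)).im = q*s := by simp
    rw [hre, him]
    refine ⟨by positivity, by positivity, ?_⟩
    have hq2' : q^2*s^2*c^2 = (w^2-k^2)*s^2*c^2 := by rw [hq2]
    nlinarith [hq2', mul_pos (mul_pos (mul_pos hw0 hc) ht) (mul_pos hs hs),
      mul_pos (mul_pos ht ht) (mul_pos hs hs)]
  · rintro ⟨him, hre, hineq⟩
    set a := z.re; set b := z.im
    have hs2 : (0:ℝ) < s^2 := by positivity
    have hb2 : (0:ℝ) < b^2 := by nlinarith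
    have hden : (0:ℝ) < b^2/s^2 + k^2 := by nlinarith [div_pos hb2 hs2, sq_nonneg k]
    set w := Real.sqrt (b^2/s^2 + k^2) with hw_def
    have hw2 : w^2 = b^2/s^2 + k^2 := Real.sq_sqrt hden.le
    have hw0 : 0 < w := Real.sqrt_pos.2 hden
    have hwk : k < w := by nlinarith [div_pos hb2 hs2]
    have hw2' : w^2*s^2 = b^2 + k^2*s^2 := by rw [hw2]; field_simp
    have hq : Real.sqrt (w^2 - k^2) = b/s := by
      rw [hw2, show b^2/s^2 + k^2 - k^2 = (b/s)^2 from by ring]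
      exact Real.sqrt_sq (div_nonneg (by linarith) hs.le)
    have h2 : (w*c)^2*s^2 < a^2*s^2 := by nlinarith [hw2', hineq, mul_pos hc hc]
    have h3 : (w*c)^2 < a^2 := by nlinarith [hs2]
    have haw : w*c < a := by nlinarith [mul_pos hw0 hc]
    refine ⟨_, ⟨w, hwk, rfl⟩, a - w*c, by linarith, ?_⟩
    rw [hq, show b/s*s = b from by field_simp]
    apply Complex.ext <;>
      simp only [Complex.add_re, Complex.sub_re, Complex.ofReal_re, Complex.mul_re,
        Complex.I_re, Complex.I_im, Complex.ofReal_im, Complex.add_im, Complex.sub_im,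
        Complex.mul_im] <;> ring

lemma psi_phi (k β : ℝ) (hc : 0 < Real.cos β) (hs : 0 < Real.sin β) (z : ℂ)
    (hz : z.im < 0) :
    phiCdH k β z * (Real.cos β : ℂ) -
      Complex.I * sqrtP ((phiCdH k β z) ^ 2 - (k : ℂ) ^ 2) * (Real.sin β : ℂ) = z := by
  set c := Real.cos β
  set s := Real.sin β
  have hcs : (c:ℂ)^2 + (s:ℂ)^2 = 1 := by
    have h := Real.cos_sq_add_sin_sq β
    exact_mod_cast h
  set u := sqrtP (z ^ 2 - (k:ℂ) ^ 2) with hu_def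
  have hu : u ^ 2 = z ^ 2 - (k:ℂ) ^ 2 := sqrtP_sq _
  set v := u * (c:ℂ) + Complex.I * z * (s:ℂ) with hv_def
  have hvre : 0 < v.re := by
    have h1 : v.re = u.re * c - z.im * s := by
      simp only [hv_def, Complex.add_re, Complex.sub_re, Complex.mul_re, Complex.I_re,
        Complex.I_im, Complex.ofReal_re, Complex.ofReal_im]
      ring
    rw [h1]
    nlinarith [re_sqrtP_nonneg (z ^ 2 - (k:ℂ) ^ 2), mul_pos (neg_pos.2 hz) hs,
      mul_nonneg (re_sqrtP_nonneg (z ^ 2 - (k:ℂ) ^ 2)) hc.le]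
  have hphi : (phiCdH k β z) ^ 2 - (k:ℂ) ^ 2 = v ^ 2 := by
    simp only [phiCdH, ← hu_def, hv_def]
    linear_combination (-((c:ℂ)^2+(s:ℂ)^2)) * hu + (k:ℂ)^2 * hcs
      + (s:ℂ)^2*(u^2-z^2) * Complex.I_sq
  rw [hphi, sqrtP_sq_of_pos_re v hvre]
  simp only [phiCdH, ← hu_def, hv_def]
  linear_combination z * hcs + (-(z*(s:ℂ)^2)) * Complex.I_sq

lemma phi_psi (k β : ℝ) (hc : 0 < Real.cos β) (hs : 0 < Real.sin β) (w : ℂ)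
    (hw : 0 < w.im) :
    phiCdH k β (w * (Real.cos β : ℂ) -
      Complex.I * sqrtP (w ^ 2 - (k : ℂ) ^ 2) * (Real.sin β : ℂ)) = w := by
  set c := Real.cos β
  set s := Real.sin β
  have hcs : (c:ℂ)^2 + (s:ℂ)^2 = 1 := by
    have h := Real.cos_sq_add_sin_sq β
    exact_mod_cast h
  set v := sqrtP (w ^ 2 - (k:ℂ) ^ 2) with hv_def
  have hv : v ^ 2 = w ^ 2 - (k:ℂ) ^ 2 := sqrtP_sq _
  set v' := v * (c:ℂ) - Complex.I * w * (s:ℂ) with hv'_def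
  have hvre : 0 < v'.re := by
    have h1 : v'.re = v.re * c + w.im * s := by
      simp only [hv'_def, Complex.add_re, Complex.sub_re, Complex.mul_re, Complex.I_re,
        Complex.I_im, Complex.ofReal_re, Complex.ofReal_im]
      ring
    rw [h1]
    nlinarith [re_sqrtP_nonneg (w ^ 2 - (k:ℂ) ^ 2), mul_pos hw hs,
      mul_nonneg (re_sqrtP_nonneg (w ^ 2 - (k:ℂ) ^ 2)) hc.le]
  have hpsi : (w * (c:ℂ) - Complex.I * v * (s:ℂ)) ^ 2 - (k:ℂ) ^ 2 = v' ^ 2 := by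
    rw [hv'_def]
    linear_combination (-((c:ℂ)^2+(s:ℂ)^2)) * hv + (k:ℂ)^2 * hcs
      + (s:ℂ)^2*(v^2-w^2) * Complex.I_sq
  simp only [phiCdH, ← hv_def]
  rw [hpsi, sqrtP_sq_of_pos_re v' hvre, hv'_def]
  linear_combination w * hcs + (-(w*(s:ℂ)^2)) * Complex.I_sq

lemma mapsTo_phi (k β : ℝ) (hk : 0 < k) (hβ : β ∈ Set.Ioo 0 (Real.pi / 2)) :
    Set.MapsTo (phiCdH k β) (DMinus k β) (DPlus k β) := by
  have hc : 0 < Real.cos β := Real.cos_pos_of_mem_Ioo ⟨by linarith [hβ.1, Real.pi_pos], hβ.2⟩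
  have hs : 0 < Real.sin β := Real.sin_pos_of_pos_of_lt_pi hβ.1 (by linarith [hβ.2, Real.pi_pos])
  set c := Real.cos β
  set s := Real.sin β
  have hcs : c^2 + s^2 = 1 := Real.cos_sq_add_sin_sq β
  intro z hz
  rw [mem_DMinus_iff k β hk hβ z] at hz
  obtain ⟨hb, ha, hH⟩ := hz
  set u := sqrtP (z ^ 2 - (k:ℂ) ^ 2) with hu_def
  have hu : u ^ 2 = z ^ 2 - (k:ℂ) ^ 2 := sqrtP_sq _
  have hre_rel : u.re^2 - u.im^2 = z.re^2 - z.im^2 - k^2 := by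
    have h := congrArg Complex.re hu
    simp only [pow_two, Complex.mul_re, Complex.sub_re, Complex.ofReal_re,
      Complex.ofReal_im] at h
    linear_combination h
  have him_rel : u.re * u.im = z.re * z.im := by
    have h := congrArg Complex.im hu
    simp only [pow_two, Complex.mul_im, Complex.sub_im, Complex.ofReal_re,
      Complex.ofReal_im] at h
    linarith
  have hab : z.re * z.im < 0 := mul_neg_of_pos_of_neg ha hb
  have hxnn : 0 ≤ u.re := re_sqrtP_nonneg _
  have hx : 0 < u.re := hxnn.lt_of_ne (by
    intro h0
    rw [← h0] at him_rel
    simp at him_rel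
    rcases him_rel with h | h <;> rw [h] at hab <;> simp at hab)
  have hy : u.im < 0 := by nlinarith
  obtain ⟨hbc, hineq2⟩ := key_real z.re (-z.im) u.re (-u.im) c s k ha (by linarith) hx
    (by linarith) hc hs hk hcs (by linear_combination hre_rel) (by linear_combination -him_rel)
    (by nlinarith)
  have hre_phi : (phiCdH k β z).re = z.re * c - u.im * s := by
    simp only [phiCdH, ← hu_def, Complex.add_re, Complex.mul_re, Complex.I_re, Complex.I_im,
      Complex.ofReal_re, Complex.ofReal_im]
    ring
  have him_phi : (phiCdH k β z).im = z.im * c + u.re * s := by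
    simp only [phiCdH, ← hu_def, Complex.add_im, Complex.mul_im, Complex.mul_re, Complex.I_re,
      Complex.I_im, Complex.ofReal_re, Complex.ofReal_im]
    ring
  rw [mem_DPlus_iff k β hk hβ, hre_phi, him_phi]
  refine ⟨by nlinarith, by nlinarith [mul_pos ha hc, mul_pos (neg_pos.2 hy) hs], by nlinarith⟩

lemma mapsTo_psi (k β : ℝ) (hk : 0 < k) (hβ : β ∈ Set.Ioo 0 (Real.pi / 2)) :
    Set.MapsTo (fun w : ℂ => w * (Real.cos β : ℂ) - Complex.I * sqrtP (w ^ 2 - (k : ℂ) ^ 2) *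
      (Real.sin β : ℂ)) (DPlus k β) (DMinus k β) := by
  have hc : 0 < Real.cos β := Real.cos_pos_of_mem_Ioo ⟨by linarith [hβ.1, Real.pi_pos], hβ.2⟩
  have hs : 0 < Real.sin β := Real.sin_pos_of_pos_of_lt_pi hβ.1 (by linarith [hβ.2, Real.pi_pos])
  set c := Real.cos β
  set s := Real.sin β
  have hcs : c^2 + s^2 = 1 := Real.cos_sq_add_sin_sq β
  intro w hw
  rw [mem_DPlus_iff k β hk hβ w] at hw
  obtain ⟨hb, ha, hH⟩ := hw
  set v := sqrtP (w ^ 2 - (k:ℂ) ^ 2) with hv_def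
  have hv : v ^ 2 = w ^ 2 - (k:ℂ) ^ 2 := sqrtP_sq _
  have hre_rel : v.re^2 - v.im^2 = w.re^2 - w.im^2 - k^2 := by
    have h := congrArg Complex.re hv
    simp only [pow_two, Complex.mul_re, Complex.sub_re, Complex.ofReal_re,
      Complex.ofReal_im] at h
    linear_combination h
  have him_rel : v.re * v.im = w.re * w.im := by
    have h := congrArg Complex.im hv
    simp only [pow_two, Complex.mul_im, Complex.sub_im, Complex.ofReal_re,
      Complex.ofReal_im] at h
    linarith
  have hab : 0 < w.re * w.im := mul_pos ha hb
  have hxnn : 0 ≤ v.re := re_sqrtP_nonneg _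
  have hx : 0 < v.re := hxnn.lt_of_ne (by
    intro h0
    rw [← h0] at him_rel
    simp at him_rel
    rcases him_rel with h | h <;> rw [h] at hab <;> simp at hab)
  have hy : 0 < v.im := by nlinarith
  obtain ⟨hbc, hineq2⟩ := key_real w.re w.im v.re v.im c s k ha hb hx hy hc hs hk hcs
    hre_rel him_rel hH
  have hre_psi : (w * (c:ℂ) - Complex.I * v * (s:ℂ)).re = w.re * c + v.im * s := by
    simp only [Complex.sub_re, Complex.mul_re, Complex.mul_im, Complex.I_re, Complex.I_im,
      Complex.ofReal_re, Complex.ofReal_im]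
    ring
  have him_psi : (w * (c:ℂ) - Complex.I * v * (s:ℂ)).im = w.im * c - v.re * s := by
    simp only [Complex.sub_im, Complex.mul_im, Complex.mul_re, Complex.I_re, Complex.I_im,
      Complex.ofReal_re, Complex.ofReal_im]
    ring
  show (w * (c:ℂ) - Complex.I * v * (s:ℂ)) ∈ DMinus k β
  rw [mem_DMinus_iff k β hk hβ, hre_psi, him_psi]
  refine ⟨by nlinarith, by nlinarith [mul_pos ha hc, mul_pos hy hs], by nlinarith⟩

/-- For `k > 0` and `β ∈ (0, π/2)`, the restriction of `φ` to `D⁻` is a bijection from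
`D⁻` onto `D⁺`, with inverse `w ↦ w cos β − i sqrtP(w² − k²) sin β`. -/
theorem phiCdH_bijOn (k β : ℝ) (hk : 0 < k) (hβ : β ∈ Set.Ioo 0 (Real.pi / 2)) :
    Set.BijOn (phiCdH k β) (DMinus k β) (DPlus k β) ∧
    Set.InvOn
      (fun w : ℂ => w * (Real.cos β : ℂ) - Complex.I * sqrtP (w ^ 2 - (k : ℂ) ^ 2) *
        (Real.sin β : ℂ))
      (phiCdH k β) (DMinus k β) (DPlus k β) := by
  have hc : 0 < Real.cos β := Real.cos_pos_of_mem_Ioo ⟨by linarith [hβ.1, Real.pi_pos], hβ.2⟩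
  have hs : 0 < Real.sin β := Real.sin_pos_of_pos_of_lt_pi hβ.1 (by linarith [hβ.2, Real.pi_pos])
  have hinv : Set.InvOn
      (fun w : ℂ => w * (Real.cos β : ℂ) - Complex.I * sqrtP (w ^ 2 - (k : ℂ) ^ 2) *
        (Real.sin β : ℂ)) (phiCdH k β) (DMinus k β) (DPlus k β) := by
    constructor
    · intro z hz
      have him : z.im < 0 := ((mem_DMinus_iff k β hk hβ z).1 hz).1
      exact psi_phi k β hc hs z him
    · intro w hw
      have him : 0 < w.im := ((mem_DPlus_iff k β hk hβ w).1 hw).1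
      exact phi_psi k β hc hs w him
  exact ⟨hinv.bijOn (mapsTo_phi k β hk hβ) (mapsTo_psi k β hk hβ), hinv⟩
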